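/- Let a > 0, let ξ : ℝ → ℝ satisfy ξ(x) ≥ a for all x, let κ > 0 be a constant, and suppose ε : ℝ → ℝ is differentiable on [0,∞), continuous, and satisfies ε'(t) = -ξ(ε(t))·ε(t) - κ·∫₀ᵗ ε(s) ds for all t ≥ 0. Then for every T ≥ 0, ∫₀ᵀ ε(s)² ds ≤ ε(0)²/(2a); in particular the function s ↦ ε(s)² is integrable on [0,∞). -/

import Mathlib

open MeasureTheory intervalIntegral Filter

/-- **Square-integrability of the AZTND error signal**: if `ξ ≥ a > 0`,
`κ > 0`, and `ε` solves `ε'(t) = -ξ(ε(t))·ε(t) - κ·∫₀ᵗ ε(s) ds` on `[0, ∞)`,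
then `∫₀ᵀ ε(s)² ds ≤ ε(0)²/(2a)` for every `T ≥ 0`, and `s ↦ ε(s)²` is
integrable on `[0, ∞)`. -/
theorem aztnd_error_square_integrable
    (a : ℝ) (ha : 0 < a)
    (ξ : ℝ → ℝ) (hξ : ∀ x : ℝ, a ≤ ξ x) (κ : ℝ) (hκ : 0 < κ)
    (ε : ℝ → ℝ) (hεc : Continuous ε)
    (hdyn : ∀ t : ℝ, 0 ≤ t →
      HasDerivAt ε (-(ξ (ε t)) * ε t - κ * ∫ s in (0:ℝ)..t, ε s) t) :
    (∀ T : ℝ, 0 ≤ T → (∫ s in (0:ℝ)..T, (ε s) ^ 2) ≤ (ε 0) ^ 2 / (2 * a)) ∧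
    IntegrableOn (fun s : ℝ => (ε s) ^ 2) (Set.Ici (0:ℝ)) := by
  have hε2c : Continuous (fun s : ℝ => (ε s) ^ 2) := by continuity
  set I : ℝ → ℝ := fun t => ∫ s in (0:ℝ)..t, ε s with hI_def
  set J : ℝ → ℝ := fun t => ∫ s in (0:ℝ)..t, (ε s) ^ 2 with hJ_def
  have hIc : Continuous I :=
    intervalIntegral.continuous_primitive (fun _ _ => hεc.intervalIntegrable _ _) 0
  have hJc : Continuous J :=
    intervalIntegral.continuous_primitive (fun _ _ => hε2c.intervalIntegrable _ _) 0
  have hI' : ∀ t : ℝ, HasDerivAt I (ε t) t := fun t =>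
    intervalIntegral.integral_hasDerivAt_right (hεc.intervalIntegrable _ _)
      (hεc.stronglyMeasurableAtFilter _ _) hεc.continuousAt
  have hJ' : ∀ t : ℝ, HasDerivAt J ((ε t) ^ 2) t := fun t =>
    intervalIntegral.integral_hasDerivAt_right (hε2c.intervalIntegrable _ _)
      (hε2c.stronglyMeasurableAtFilter _ _) hε2c.continuousAt
  set g : ℝ → ℝ := fun t => (ε t) ^ 2 / 2 + κ / 2 * (I t) ^ 2 + a * J t with hg_def
  have hgc : Continuous g := by
    apply Continuous.add
    apply Continuous.add
    · exact (hεc.pow 2).div_const 2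
    · exact continuous_const.mul (hIc.pow 2)
    · exact continuous_const.mul hJc
  have hg' : ∀ t : ℝ, 0 ≤ t →
      HasDerivAt g ((a - ξ (ε t)) * (ε t) ^ 2) t := by
    intro t ht
    have h1 : HasDerivAt (fun u => (ε u) ^ 2 / 2)
        ((2 * (ε t) ^ 1 * (-(ξ (ε t)) * ε t - κ * I t)) / 2) t :=
      ((hdyn t ht).pow 2).div_const 2
    have h2 : HasDerivAt (fun u => κ / 2 * (I u) ^ 2)
        (κ / 2 * (2 * (I t) ^ 1 * ε t)) t := ((hI' t).pow 2).const_mul (κ / 2)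
    have h3 : HasDerivAt (fun u => a * J u) (a * (ε t) ^ 2) t := (hJ' t).const_mul a
    have := (h1.add h2).add h3
    refine HasDerivAt.congr_deriv this ?_
    ring
  have hanti : AntitoneOn g (Set.Ici (0:ℝ)) := by
    apply antitoneOn_of_deriv_nonpos (convex_Ici 0) hgc.continuousOn
    · intro x hx
      rw [interior_Ici] at hx
      exact (hg' x (le_of_lt hx)).differentiableAt.differentiableWithinAt
    · intro x hx
      rw [interior_Ici] at hx
      rw [(hg' x (le_of_lt hx)).deriv]
      have : ξ (ε x) - a ≥ 0 := by linarith [hξ (ε x)]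
      nlinarith [sq_nonneg (ε x)]
  have key : ∀ T : ℝ, 0 ≤ T → (∫ s in (0:ℝ)..T, (ε s) ^ 2) ≤ (ε 0) ^ 2 / (2 * a) := by
    intro T hT
    have h0 := hanti (Set.self_mem_Ici) (Set.mem_Ici.mpr hT) hT
    have hg0 : g 0 = (ε 0) ^ 2 / 2 := by
      simp [hg_def, hI_def, hJ_def]
    have hnonneg : 0 ≤ (ε T) ^ 2 / 2 + κ / 2 * (I T) ^ 2 := by positivity
    have : a * J T ≤ (ε 0) ^ 2 / 2 := by
      have := h0
      rw [hg0] at this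
      simp only [hg_def] at this
      linarith
    rw [le_div_iff₀ (by positivity)]
    calc (∫ s in (0:ℝ)..T, (ε s) ^ 2) * (2 * a) = 2 * (a * J T) := by
          simp only [hJ_def]; ring
      _ ≤ 2 * ((ε 0) ^ 2 / 2) := by linarith
      _ = (ε 0) ^ 2 := by ring
  refine ⟨key, ?_⟩
  rw [integrableOn_Ici_iff_integrableOn_Ioi]
  apply integrableOn_Ioi_of_intervalIntegral_norm_bounded ((ε 0) ^ 2 / (2 * a))
    (0 : ℝ) (fun n : ℕ => (hε2c.integrableOn_Ioc)) tendsto_natCast_atTop_atTop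
  filter_upwards with n
  have : (∫ x in (0:ℝ)..(n:ℝ), ‖(ε x) ^ 2‖) = ∫ x in (0:ℝ)..(n:ℝ), (ε x) ^ 2 := by
    apply intervalIntegral.integral_congr
    intro x _
    exact Real.norm_of_nonneg (sq_nonneg _)
  rw [this]
  exact key n (Nat.cast_nonneg n)
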